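/- For every integer n ≥ 7, if G is an elongated triangular prism graph on 2n−3 vertices, then the complement of G contains K_n as a minor. -/

import Mathlib

open SimpleGraph

/-- `H` is a minor of `G` (branch-set / minor-model definition): each vertex of `H`
is represented by a connected branch set in `G`, branch sets are pairwise disjoint,
and edges of `H` are realized by edges between the corresponding branch sets. -/
def IsMinorOf {α β : Type*} (H : SimpleGraph α) (G : SimpleGraph β) : Prop :=
  ∃ f : α → Set β,
    (∀ a, (G.induce (f a)).Connected) ∧
    (∀ a b, a ≠ b → Disjoint (f a) (f b)) ∧
    (∀ a b, H.Adj a b → ∃ u ∈ f a, ∃ v ∈ f b, G.Adj u v)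

/-- Model of an elongated triangular prism: for `m : Fin 3 → ℕ`, the graph with
the two triangles `(i, 0)`, `i : Fin 3` and `(i, m i + 1)`, `i : Fin 3`, joined by
three internally disjoint paths `(i, 0), (i, 1), …, (i, m i + 1)` (so `m i` counts
the subdivision vertices of the `i`-th connecting edge of the prism). -/
def prismGraph (m : Fin 3 → ℕ) : SimpleGraph (Σ i : Fin 3, Fin (m i + 2)) where
  Adj x y :=
    (x.1 = y.1 ∧ ((x.2 : ℕ) + 1 = (y.2 : ℕ) ∨ (y.2 : ℕ) + 1 = (x.2 : ℕ))) ∨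
    (x.1 ≠ y.1 ∧ (((x.2 : ℕ) = 0 ∧ (y.2 : ℕ) = 0) ∨
      ((x.2 : ℕ) = m x.1 + 1 ∧ (y.2 : ℕ) = m y.1 + 1)))
  symm := by
    constructor
    rintro x y (⟨h1, h2⟩ | ⟨h1, h2⟩)
    · exact Or.inl ⟨h1.symm, h2.symm⟩
    · rcases h2 with ⟨a, b⟩ | ⟨a, b⟩
      · exact Or.inr ⟨h1.symm, Or.inl ⟨b, a⟩⟩
      · exact Or.inr ⟨h1.symm, Or.inr ⟨b, a⟩⟩
  loopless := by
    constructor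
    rintro x (⟨h1, h2⟩ | ⟨h1, h2⟩)
    · omega
    · exact h1 rfl

/-- A graph is an elongated triangular prism if it is isomorphic to `prismGraph m`
for some subdivision counts `m`. -/
def IsElongatedTriangularPrism {V : Type*} (G : SimpleGraph V) : Prop :=
  ∃ m : Fin 3 → ℕ, Nonempty (G ≃g prismGraph m)

section PrismAux

open SimpleGraph

/-- Minors transfer along isomorphisms. -/
lemma isoMinor {α V W : Type*} {K : SimpleGraph α} {G : SimpleGraph V} {H : SimpleGraph W}
    (e : G ≃g H) (h : IsMinorOf K H) : IsMinorOf K G := by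
  obtain ⟨f, h1, h2, h3⟩ := h
  refine ⟨fun a => ⇑e ⁻¹' f a, fun a => ?_, fun a b hab => (h2 a b hab).preimage _,
    fun a b hab => ?_⟩
  · have iso : (G.induce (⇑e ⁻¹' f a)) ≃g (H.induce (f a)) :=
      { toEquiv := Equiv.subtypeEquiv e.toEquiv (fun x => Iff.rfl)
        map_rel_iff' := by intro u v; exact e.map_adj_iff }
    exact iso.connected_iff.mpr (h1 a)
  · obtain ⟨u, hu, v, hv, huv⟩ := h3 a b hab
    refine ⟨e.symm u, ?_, e.symm v, ?_, ?_⟩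
    · simp [Set.mem_preimage, hu]
    · simp [Set.mem_preimage, hv]
    · exact e.symm.map_adj_iff.mpr huv

/-- Complement isomorphism. -/
def isoCompl {V W : Type*} {G : SimpleGraph V} {H : SimpleGraph W} (e : G ≃g H) :
    Gᶜ ≃g Hᶜ where
  toEquiv := e.toEquiv
  map_rel_iff' := by
    intro u v
    simp only [compl_adj, ne_eq, EmbeddingLike.apply_eq_iff_eq]
    exact and_congr Iff.rfl (not_congr e.map_adj_iff)

/-- An induced subgraph on a pair `{x, y}` which is either degenerate or an edge
is connected. -/
lemma pair_connected {V : Type*} {G : SimpleGraph V} {x y : V} (h : x = y ∨ G.Adj x y) :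
    (G.induce ({x, y} : Set V)).Connected := by
  have hx : x ∈ ({x, y} : Set V) := by simp
  haveI : Nonempty ↥({x, y} : Set V) := ⟨⟨x, hx⟩⟩
  constructor
  rintro ⟨u, hu⟩ ⟨v, hv⟩
  simp only [Set.mem_insert_iff, Set.mem_singleton_iff] at hu hv
  rcases h with rfl | hadj
  · have huv : u = v := by rcases hu with rfl | rfl <;> rcases hv with rfl | rfl <;> rfl
    exact huv ▸ Reachable.refl _
  · rcases hu with rfl | rfl <;> rcases hv with rfl | rfl
    · exact Reachable.refl _
    · exact Adj.reachable (by exact hadj)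
    · exact Adj.reachable (by exact hadj.symm)
    · exact Reachable.refl _

/-- Path-with-four-chords adjacency relation on indices `0..a+b+c+5`, describing the
elongated triangular prism after unfolding it along a Hamiltonian-type path. -/
def chordRel (a b c x y : ℕ) : Prop :=
  y = x + 1 ∨ (x = 0 ∧ (y = a + b + 3 ∨ y = a + b + 4)) ∨
    (y = a + b + c + 5 ∧ (x = a + 1 ∨ x = a + 2))

/-- Symmetrized version of `chordRel`. -/
def adjIdx (a b c x y : ℕ) : Prop := chordRel a b c x y ∨ chordRel a b c y x

/-- The Hamiltonian-type enumeration of the vertices of `prismGraph m`, traversing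
path `i₀` from top to bottom, then path `i₁` bottom to top, then path `i₂` top to bottom. -/
def zV (m : Fin 3 → ℕ) (i₀ i₁ i₂ : Fin 3) (t : ℕ) : Σ i : Fin 3, Fin (m i + 2) :=
  if h : t ≤ m i₀ + 1 then ⟨i₀, ⟨m i₀ + 1 - t, by omega⟩⟩
  else if h2 : t ≤ m i₀ + m i₁ + 3 then ⟨i₁, ⟨t - (m i₀ + 2), by omega⟩⟩
  else ⟨i₂, ⟨m i₀ + m i₁ + m i₂ + 5 - t, by omega⟩⟩

lemma prism_adj (m : Fin 3 → ℕ) (x y : Σ i : Fin 3, Fin (m i + 2)) :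
    (prismGraph m).Adj x y ↔
      ((x.1 = y.1 ∧ ((x.2 : ℕ) + 1 = (y.2 : ℕ) ∨ (y.2 : ℕ) + 1 = (x.2 : ℕ))) ∨
       (x.1 ≠ y.1 ∧ (((x.2 : ℕ) = 0 ∧ (y.2 : ℕ) = 0) ∨
         ((x.2 : ℕ) = m x.1 + 1 ∧ (y.2 : ℕ) = m y.1 + 1)))) := Iff.rfl

lemma zV_inj (m : Fin 3 → ℕ) (i₀ i₁ i₂ : Fin 3)
    (h01 : i₀ ≠ i₁) (h02 : i₀ ≠ i₂) (h12 : i₁ ≠ i₂) {x y : ℕ}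
    (hx : x ≤ m i₀ + m i₁ + m i₂ + 5) (hy : y ≤ m i₀ + m i₁ + m i₂ + 5)
    (h : zV m i₀ i₁ i₂ x = zV m i₀ i₁ i₂ y) : x = y := by
  unfold zV at h
  split_ifs at h <;>
    simp only [Sigma.mk.inj_iff, heq_eq_eq, Fin.mk.injEq] at h <;>
    first
      | omega
      | exact absurd h.1 h01
      | exact absurd h.1 h02
      | exact absurd h.1 h12
      | exact absurd h.1.symm h01
      | exact absurd h.1.symm h02
      | exact absurd h.1.symm h12

lemma zV_adj (m : Fin 3 → ℕ) (i₀ i₁ i₂ : Fin 3)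
    (h01 : i₀ ≠ i₁) (h02 : i₀ ≠ i₂) (h12 : i₁ ≠ i₂) {x y : ℕ}
    (hx : x ≤ m i₀ + m i₁ + m i₂ + 5) (hy : y ≤ m i₀ + m i₁ + m i₂ + 5) :
    (prismGraph m).Adj (zV m i₀ i₁ i₂ x) (zV m i₀ i₁ i₂ y) ↔
      adjIdx (m i₀) (m i₁) (m i₂) x y := by
  have h10 := h01.symm
  have h20 := h02.symm
  have h21 := h12.symm
  unfold zV adjIdx chordRel
  split_ifs <;>
    rw [prism_adj] <;>
    simp only [ne_eq, h01, h02, h12, h10, h20, h21, not_false_iff, not_true,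
      eq_self_iff_true, true_and, false_and, and_false, and_true, false_or, or_false,
      Fin.val_mk] <;>
    omega

/-- The smaller element of the `p`-th branch set (as an index along the enumeration). -/
def uIdx (n p : ℕ) : ℕ :=
  if p = 0 then 0 else if p = 1 then n - 2 else if p = 2 then 2 * n - 4 else p - 2

/-- The larger element of the `p`-th branch set (as an index along the enumeration). -/
def vIdx (n a p : ℕ) : ℕ :=
  if p = 0 then 0 else if p = 1 then n - 2 else if p = 2 then 2 * n - 4 else
  if a = n - 5 ∧ n - 3 ≤ p then
    (if p = n - 3 then 2 * n - 5 else if p = n - 2 then 2 * n - 7 else 2 * n - 6)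
  else p + n - 4

lemma uv_spec (n a p : ℕ) (hn : 7 ≤ n) (hp : p < n) :
    (p = 0 ∧ uIdx n p = 0 ∧ vIdx n a p = 0) ∨
    (p = 1 ∧ uIdx n p + 2 = n ∧ vIdx n a p + 2 = n) ∨
    (p = 2 ∧ uIdx n p + 4 = 2 * n ∧ vIdx n a p + 4 = 2 * n) ∨
    (3 ≤ p ∧ ¬(a + 5 = n ∧ n ≤ p + 3) ∧ uIdx n p + 2 = p ∧ vIdx n a p + 4 = p + n) ∨
    (a + 5 = n ∧ p + 3 = n ∧ uIdx n p + 2 = p ∧ vIdx n a p + 5 = 2 * n) ∨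
    (a + 5 = n ∧ p + 2 = n ∧ uIdx n p + 2 = p ∧ vIdx n a p + 7 = 2 * n) ∨
    (a + 5 = n ∧ p + 1 = n ∧ uIdx n p + 2 = p ∧ vIdx n a p + 6 = 2 * n) := by
  unfold uIdx vIdx
  split_ifs with h1 h2 h3 h4 h5 h6
  · exact Or.inl ⟨h1, rfl, rfl⟩
  · exact Or.inr (Or.inl ⟨h2, by omega, by omega⟩)
  · exact Or.inr (Or.inr (Or.inl ⟨h3, by omega, by omega⟩))
  · exact Or.inr (Or.inr (Or.inr (Or.inr (Or.inl ⟨by omega, by omega, by omega, by omega⟩))))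
  · exact Or.inr (Or.inr (Or.inr (Or.inr (Or.inr
      (Or.inl ⟨by omega, by omega, by omega, by omega⟩)))))
  · exact Or.inr (Or.inr (Or.inr (Or.inr (Or.inr
      (Or.inr ⟨by omega, by omega, by omega, by omega⟩)))))
  · exact Or.inr (Or.inr (Or.inr (Or.inl ⟨by omega, by omega, by omega, by omega⟩)))

lemma uv_le (n a p : ℕ) (hn : 7 ≤ n) (hp : p < n) :
    uIdx n p ≤ 2 * n - 4 ∧ vIdx n a p ≤ 2 * n - 4 := by
  rcases uv_spec n a p hn hp with h | h | h | h | h | h | h <;> omega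

lemma uv_distinct (n a p q : ℕ) (hn : 7 ≤ n) (hp : p < n) (hq : q < n) (hpq : p ≠ q) :
    uIdx n p ≠ uIdx n q ∧ uIdx n p ≠ vIdx n a q ∧
    vIdx n a p ≠ uIdx n q ∧ vIdx n a p ≠ vIdx n a q := by
  rcases uv_spec n a p hn hp with h | h | h | h | h | h | h <;>
    rcases uv_spec n a q hn hq with g | g | g | g | g | g | g <;> omega

lemma uv_pair (n a b c p : ℕ) (hn : 7 ≤ n) (hsum : a + b + c + 9 = 2 * n) (hp : p < n) :
    uIdx n p = vIdx n a p ∨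
      (uIdx n p ≠ vIdx n a p ∧ ¬ adjIdx a b c (uIdx n p) (vIdx n a p)) := by
  rcases uv_spec n a p hn hp with h | h | h | h | h | h | h
  · exact Or.inl (by omega)
  · exact Or.inl (by omega)
  · exact Or.inl (by omega)
  · refine Or.inr ⟨by omega, ?_⟩
    unfold adjIdx chordRel
    omega
  · refine Or.inr ⟨by omega, ?_⟩
    unfold adjIdx chordRel
    omega
  · refine Or.inr ⟨by omega, ?_⟩
    unfold adjIdx chordRel
    omega
  · refine Or.inr ⟨by omega, ?_⟩
    unfold adjIdx chordRel
    omega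

set_option maxHeartbeats 1000000 in
lemma key (n a b c : ℕ) (hn : 7 ≤ n) (hsum : a + b + c + 9 = 2 * n)
    (ha : a + 4 ≠ n) (ha' : a + 3 ≠ n)
    (hc : c + 5 ≠ n) (hc' : c + 4 ≠ n) (hc'' : c + 3 ≠ n)
    (p q : ℕ) (hp : p < n) (hq : q < n) (hpq : p ≠ q) :
    ∃ x y : ℕ, (x = uIdx n p ∨ x = vIdx n a p) ∧ (y = uIdx n q ∨ y = vIdx n a q) ∧
      ¬ adjIdx a b c x y := by
  by_contra hcon
  push_neg at hcon
  have A1 := hcon (uIdx n p) (uIdx n q) (Or.inl rfl) (Or.inl rfl)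
  have A2 := hcon (uIdx n p) (vIdx n a q) (Or.inl rfl) (Or.inr rfl)
  have A3 := hcon (vIdx n a p) (uIdx n q) (Or.inr rfl) (Or.inl rfl)
  have A4 := hcon (vIdx n a p) (vIdx n a q) (Or.inr rfl) (Or.inr rfl)
  unfold adjIdx chordRel at A1 A2 A3 A4
  rcases uv_spec n a p hn hp with h | h | h | h | h | h | h <;>
    rcases uv_spec n a q hn hq with g | g | g | g | g | g | g <;> omega

set_option maxHeartbeats 2000000 in
lemma prism_minor (n : ℕ) (hn : 7 ≤ n) (m : Fin 3 → ℕ) (i₀ i₁ i₂ : Fin 3)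
    (h01 : i₀ ≠ i₁) (h02 : i₀ ≠ i₂) (h12 : i₁ ≠ i₂)
    (hsum : m i₀ + m i₁ + m i₂ = 2 * n - 9)
    (ha : m i₀ ≠ n - 4) (ha' : m i₀ ≠ n - 3)
    (hc : m i₂ ≠ n - 5) (hc' : m i₂ ≠ n - 4) (hc'' : m i₂ ≠ n - 3) :
    IsMinorOf (⊤ : SimpleGraph (Fin n)) (prismGraph m)ᶜ := by
  set a := m i₀ with hadef
  set b := m i₁ with hbdef
  set c := m i₂ with hcdef
  have hN : a + b + c + 5 = 2 * n - 4 := by omega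
  refine ⟨fun p => {zV m i₀ i₁ i₂ (uIdx n p.val), zV m i₀ i₁ i₂ (vIdx n a p.val)},
    ?_, ?_, ?_⟩
  · intro p
    have hp : (p : ℕ) < n := p.isLt
    have hle := uv_le n a p.val hn hp
    rcases uv_pair n a b c p.val hn (by omega) hp with heq | ⟨hne1, hne2⟩
    · exact pair_connected (Or.inl (by rw [heq]))
    · refine pair_connected (Or.inr ?_)
      rw [compl_adj]
      constructor
      · intro hzeq
        exact hne1 (zV_inj m i₀ i₁ i₂ h01 h02 h12 (by omega) (by omega) hzeq)
      · intro hadj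
        exact hne2 ((zV_adj m i₀ i₁ i₂ h01 h02 h12 (by omega) (by omega)).mp hadj)
  · intro p q hpq
    have hp : (p : ℕ) < n := p.isLt
    have hq : (q : ℕ) < n := q.isLt
    have hlep := uv_le n a p.val hn hp
    have hleq := uv_le n a q.val hn hq
    have hd := uv_distinct n a p.val q.val hn hp hq (fun h => hpq (Fin.ext h))
    rw [Set.disjoint_left]
    intro w hw1 hw2
    simp only [Set.mem_insert_iff, Set.mem_singleton_iff] at hw1 hw2
    rcases hw1 with rfl | rfl <;> rcases hw2 with hw2 | hw2 <;>
      · have := zV_inj m i₀ i₁ i₂ h01 h02 h12 (by omega) (by omega) hw2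
        omega
  · intro p q hpq
    rw [top_adj] at hpq
    have hp : (p : ℕ) < n := p.isLt
    have hq : (q : ℕ) < n := q.isLt
    have hlep := uv_le n a p.val hn hp
    have hleq := uv_le n a q.val hn hq
    have hd := uv_distinct n a p.val q.val hn hp hq (fun h => hpq (Fin.ext h))
    have e1 : a + b + c + 9 = 2 * n := by omega
    have e2 : a + 4 ≠ n := by omega
    have e3 : a + 3 ≠ n := by omega
    have e4 : c + 5 ≠ n := by omega
    have e5 : c + 4 ≠ n := by omega
    have e6 : c + 3 ≠ n := by omega
    obtain ⟨x, y, hxmem, hymem, hnadj⟩ :=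
      key n a b c hn e1 e2 e3 e4 e5 e6
        p.val q.val hp hq (fun h => hpq (Fin.ext h))
    have hxle : x ≤ 2 * n - 4 := by rcases hxmem with rfl | rfl <;> omega
    have hyle : y ≤ 2 * n - 4 := by rcases hymem with rfl | rfl <;> omega
    have hxy : x ≠ y := by rcases hxmem with rfl | rfl <;> rcases hymem with rfl | rfl <;> omega
    refine ⟨zV m i₀ i₁ i₂ x, ?_, zV m i₀ i₁ i₂ y, ?_, ?_⟩
    · rcases hxmem with rfl | rfl
      · exact Set.mem_insert _ _
      · exact Set.mem_insert_iff.mpr (Or.inr rfl)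
    · rcases hymem with rfl | rfl
      · exact Set.mem_insert _ _
      · exact Set.mem_insert_iff.mpr (Or.inr rfl)
    · rw [compl_adj]
      constructor
      · intro hzeq
        exact hxy (zV_inj m i₀ i₁ i₂ h01 h02 h12 (by omega) (by omega) hzeq)
      · intro hadj
        exact hnadj ((zV_adj m i₀ i₁ i₂ h01 h02 h12 (by omega) (by omega)).mp hadj)

lemma select (n : ℕ) (hn : 7 ≤ n) (m : Fin 3 → ℕ)
    (hsum : m 0 + m 1 + m 2 = 2 * n - 9) :
    ∃ i₀ i₁ i₂ : Fin 3, i₀ ≠ i₁ ∧ i₀ ≠ i₂ ∧ i₁ ≠ i₂ ∧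
      m i₀ + m i₁ + m i₂ = 2 * n - 9 ∧ m i₀ ≠ n - 4 ∧ m i₀ ≠ n - 3 ∧
      m i₂ ≠ n - 5 ∧ m i₂ ≠ n - 4 ∧ m i₂ ≠ n - 3 := by
  by_cases h0 : m 0 ≠ n - 5 ∧ m 0 ≠ n - 4 ∧ m 0 ≠ n - 3
  · by_cases h1 : m 1 ≠ n - 4 ∧ m 1 ≠ n - 3
    · exact ⟨1, 2, 0, by decide, by decide, by decide, by omega,
        h1.1, h1.2, h0.1, h0.2.1, h0.2.2⟩
    · refine ⟨2, 1, 0, by decide, by decide, by decide, by omega,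
        ?_, ?_, h0.1, h0.2.1, h0.2.2⟩ <;> omega
  · by_cases h1 : m 1 ≠ n - 5 ∧ m 1 ≠ n - 4 ∧ m 1 ≠ n - 3
    · by_cases h2 : m 2 ≠ n - 4 ∧ m 2 ≠ n - 3
      · exact ⟨2, 0, 1, by decide, by decide, by decide, by omega,
          h2.1, h2.2, h1.1, h1.2.1, h1.2.2⟩
      · refine ⟨0, 2, 1, by decide, by decide, by decide, by omega,
          ?_, ?_, h1.1, h1.2.1, h1.2.2⟩ <;> omega
    · by_cases h2 : m 2 ≠ n - 5 ∧ m 2 ≠ n - 4 ∧ m 2 ≠ n - 3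
      · by_cases h0' : m 0 ≠ n - 4 ∧ m 0 ≠ n - 3
        · exact ⟨0, 1, 2, by decide, by decide, by decide, by omega,
            h0'.1, h0'.2, h2.1, h2.2.1, h2.2.2⟩
        · refine ⟨1, 0, 2, by decide, by decide, by decide, by omega,
            ?_, ?_, h2.1, h2.2.1, h2.2.2⟩ <;> omega
      · exfalso
        push_neg at h0 h1 h2
        omega

end PrismAux

/-- For `n ≥ 7`, the complement of an elongated triangular prism of order `2n - 3`
has a `K n` minor. -/
theorem prism_compl_Kn (n : ℕ) (hn : 7 ≤ n) {V : Type*} [Fintype V]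
    (G : SimpleGraph V) (hG : IsElongatedTriangularPrism G)
    (hcard : Fintype.card V = 2 * n - 3) :
    IsMinorOf (⊤ : SimpleGraph (Fin n)) Gᶜ := by
  obtain ⟨m, ⟨e⟩⟩ := hG
  have hcard2 : Fintype.card (Σ i : Fin 3, Fin (m i + 2)) = 2 * n - 3 := by
    rw [← hcard]
    exact (Fintype.card_congr e.toEquiv).symm
  have hsum : m 0 + m 1 + m 2 = 2 * n - 9 := by
    rw [Fintype.card_sigma] at hcard2
    simp only [Fintype.card_fin, Fin.sum_univ_three] at hcard2
    omega
  obtain ⟨i₀, i₁, i₂, h01, h02, h12, hs, ha, ha', hc, hc', hc''⟩ := select n hn m hsum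
  have hm := prism_minor n hn m i₀ i₁ i₂ h01 h02 h12 hs ha ha' hc hc' hc''
  exact isoMinor (isoCompl e) hm
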